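/- Let G be a graph, v a vertex of G, and ℓ ≥ 1 an integer. The number of connected vertex subsets S of G such that v ∈ S and the sum of the G-degrees of vertices in S equals ℓ is at most (2e)^(2ℓ-1). -/

import Mathlib

open scoped Classical

namespace NPolyAux

variable {V : Type*} [Fintype V] [DecidableEq V]

/-- Contraction of the edge `vw` onto `v` (with `w` made isolated). -/
def contract (G : SimpleGraph V) (v w : V) : SimpleGraph V where
  Adj a b := a ≠ b ∧ ((G.Adj a b ∧ a ≠ w ∧ b ≠ w) ∨ (a = v ∧ G.Adj w b ∧ b ≠ w)
      ∨ (b = v ∧ G.Adj a w ∧ a ≠ w))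
  symm := ⟨by
    rintro a b ⟨hab, h⟩
    refine ⟨hab.symm, ?_⟩
    rcases h with ⟨h1, h2, h3⟩ | ⟨h1, h2, h3⟩ | ⟨h1, h2, h3⟩
    · exact Or.inl ⟨h1.symm, h3, h2⟩
    · exact Or.inr (Or.inr ⟨h1, h2.symm, h3⟩)
    · exact Or.inr (Or.inl ⟨h1, h2.symm, h3⟩)⟩
  loopless := ⟨fun a h => h.1 rfl⟩

lemma contract_adj {G : SimpleGraph V} {v w a b : V} :
    (contract G v w).Adj a b ↔ a ≠ b ∧ ((G.Adj a b ∧ a ≠ w ∧ b ≠ w) ∨ (a = v ∧ G.Adj w b ∧ b ≠ w)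
      ∨ (b = v ∧ G.Adj a w ∧ a ≠ w)) := Iff.rfl

lemma contract_degree_le {G : SimpleGraph V} {v w u : V} (huv : u ≠ v) (_huw : u ≠ w) :
    (contract G v w).degree u ≤ G.degree u := by
  rw [← SimpleGraph.card_neighborFinset_eq_degree, ← SimpleGraph.card_neighborFinset_eq_degree]
  by_cases hGuw : G.Adj u w
  · have hsub : (contract G v w).neighborFinset u ⊆ insert v ((G.neighborFinset u).erase w) := by
      intro x hx
      rw [SimpleGraph.mem_neighborFinset, contract_adj] at hx
      obtain ⟨hne, h⟩ := hx
      rcases h with ⟨h1, h2, h3⟩ | ⟨h1, h2, h3⟩ | ⟨h1, h2, h3⟩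
      · exact Finset.mem_insert_of_mem
          (Finset.mem_erase.mpr ⟨h3, (SimpleGraph.mem_neighborFinset _ _ _).mpr h1⟩)
      · exact absurd h1 huv
      · rw [h1]; exact Finset.mem_insert_self v _
    calc ((contract G v w).neighborFinset u).card
        ≤ (insert v ((G.neighborFinset u).erase w)).card := Finset.card_le_card hsub
      _ ≤ ((G.neighborFinset u).erase w).card + 1 := Finset.card_insert_le _ _
      _ ≤ (G.neighborFinset u).card := by
          have hw' : w ∈ G.neighborFinset u := (SimpleGraph.mem_neighborFinset _ _ _).mpr hGuw
          have := Finset.card_erase_of_mem hw'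
          have hpos : 1 ≤ (G.neighborFinset u).card := Finset.card_pos.mpr ⟨w, hw'⟩
          omega
  · have hsub : (contract G v w).neighborFinset u ⊆ G.neighborFinset u := by
      intro x hx
      rw [SimpleGraph.mem_neighborFinset, contract_adj] at hx
      obtain ⟨hne, h⟩ := hx
      rcases h with ⟨h1, h2, h3⟩ | ⟨h1, h2, h3⟩ | ⟨h1, h2, h3⟩
      · exact (SimpleGraph.mem_neighborFinset _ _ _).mpr h1
      · exact absurd h1 huv
      · exact absurd h2 hGuw
    exact Finset.card_le_card hsub

lemma contract_degree_v {G : SimpleGraph V} {v w : V} (hadj : G.Adj v w) :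
    (contract G v w).degree v + 2 ≤ G.degree v + G.degree w := by
  rw [← SimpleGraph.card_neighborFinset_eq_degree, ← SimpleGraph.card_neighborFinset_eq_degree,
    ← SimpleGraph.card_neighborFinset_eq_degree]
  have hsub : (contract G v w).neighborFinset v ⊆
      ((G.neighborFinset v).erase w) ∪ ((G.neighborFinset w).erase v) := by
    intro x hx
    rw [SimpleGraph.mem_neighborFinset, contract_adj] at hx
    obtain ⟨hne, h⟩ := hx
    rcases h with ⟨h1, h2, h3⟩ | ⟨h1, h2, h3⟩ | ⟨h1, h2, h3⟩
    · exact Finset.mem_union_left _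
        (Finset.mem_erase.mpr ⟨h3, (SimpleGraph.mem_neighborFinset _ _ _).mpr h1⟩)
    · exact Finset.mem_union_right _
        (Finset.mem_erase.mpr ⟨fun hxv => hne (h1.trans hxv.symm),
          (SimpleGraph.mem_neighborFinset _ _ _).mpr h2⟩)
    · exact absurd h1 (Ne.symm hne)
  have h1 : w ∈ G.neighborFinset v := (SimpleGraph.mem_neighborFinset _ _ _).mpr hadj
  have h2 : v ∈ G.neighborFinset w := (SimpleGraph.mem_neighborFinset _ _ _).mpr hadj.symm
  have hcard := Finset.card_le_card hsub
  have hcard2 := Finset.card_union_le ((G.neighborFinset v).erase w) ((G.neighborFinset w).erase v)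
  have e1 := Finset.card_erase_of_mem h1
  have e2 := Finset.card_erase_of_mem h2
  have p1 : 1 ≤ (G.neighborFinset v).card := Finset.card_pos.mpr ⟨w, h1⟩
  have p2 : 1 ≤ (G.neighborFinset w).card := Finset.card_pos.mpr ⟨v, h2⟩
  omega

lemma deleteEdges_induce_eq {G : SimpleGraph V} {v w : V} {S : Finset V} (hw : w ∉ S) :
    (G.deleteEdges {s(v,w)}).induce (S : Set V) = G.induce (S : Set V) := by
  ext a b
  simp only [SimpleGraph.comap_adj, SimpleGraph.deleteEdges_adj, Set.mem_singleton_iff]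
  constructor
  · rintro ⟨h, -⟩; exact h
  · intro h
    refine ⟨h, fun hmem => ?_⟩
    rcases Sym2.eq_iff.mp hmem with ⟨h1, h2⟩ | ⟨h1, h2⟩
    · exact hw (h2 ▸ b.2)
    · exact hw (h1 ▸ a.2)

lemma deleteEdges_degree_eq {G : SimpleGraph V} {v w u : V} (huv : u ≠ v) (huw : u ≠ w) :
    (G.deleteEdges {s(v,w)}).degree u = G.degree u := by
  rw [← SimpleGraph.card_neighborFinset_eq_degree, ← SimpleGraph.card_neighborFinset_eq_degree]
  congr 1
  ext x
  simp only [SimpleGraph.mem_neighborFinset, SimpleGraph.deleteEdges_adj, Set.mem_singleton_iff]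
  constructor
  · rintro ⟨h, -⟩; exact h
  · intro h
    refine ⟨h, fun hmem => ?_⟩
    rcases Sym2.eq_iff.mp hmem with ⟨h1, h2⟩ | ⟨h1, h2⟩
    · exact huv h1
    · exact huw h1

lemma deleteEdges_degree_v {G : SimpleGraph V} {v w : V} (hadj : G.Adj v w) :
    (G.deleteEdges {s(v,w)}).degree v + 1 = G.degree v := by
  rw [← SimpleGraph.card_neighborFinset_eq_degree, ← SimpleGraph.card_neighborFinset_eq_degree]
  have heq : (G.deleteEdges {s(v,w)}).neighborFinset v = (G.neighborFinset v).erase w := by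
    ext x
    simp only [SimpleGraph.mem_neighborFinset, SimpleGraph.deleteEdges_adj, Set.mem_singleton_iff,
      Finset.mem_erase]
    constructor
    · rintro ⟨h, hne⟩
      refine ⟨fun hxw => hne ?_, h⟩
      rw [hxw]
    · rintro ⟨hne, h⟩
      refine ⟨h, fun hmem => ?_⟩
      rcases Sym2.eq_iff.mp hmem with ⟨h1, h2⟩ | ⟨h1, h2⟩
      · exact hne h2
      · exact hadj.ne h1
  rw [heq, Finset.card_erase_of_mem ((SimpleGraph.mem_neighborFinset _ _ _).mpr hadj)]
  have : 1 ≤ (G.neighborFinset v).card :=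
    Finset.card_pos.mpr ⟨w, (SimpleGraph.mem_neighborFinset _ _ _).mpr hadj⟩
  omega

lemma mem_erase_of_r {v w : V} {S : Finset V} (hv : v ∈ S) (hvw : v ≠ w) :
    ∀ x ∈ S, (if x = w then v else x) ∈ S.erase w := by
  intro x hx
  by_cases hxw : x = w
  · simp [hxw, Finset.mem_erase, hvw, hv]
  · simp [hxw, Finset.mem_erase, hx]

lemma contract_induce_connected {G : SimpleGraph V} {v w : V} (hadj : G.Adj v w)
    {S : Finset V} (hv : v ∈ S) (_hw : w ∈ S)
    (hconn : (G.induce (S : Set V)).Connected) :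
    ((contract G v w).induce ((S.erase w : Finset V) : Set V)).Connected := by
  set r : V → V := fun x => if x = w then v else x with hr
  have hmem : ∀ x ∈ S, r x ∈ S.erase w := mem_erase_of_r hv hadj.ne
  have key : ∀ (a b : (S : Set V)), (G.induce (S : Set V)).Walk a b →
      ((contract G v w).induce ((S.erase w : Finset V) : Set V)).Reachable
        ⟨r a, hmem a a.2⟩ ⟨r b, hmem b b.2⟩ := by
    intro a b p
    induction p with
    | nil => exact SimpleGraph.Reachable.refl _
    | @cons x c b h p ih =>
      refine SimpleGraph.Reachable.trans ?_ ih
      by_cases heq : r (x : V) = r (c : V)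
      · rw [show (⟨r x, hmem x x.2⟩ : ((S.erase w : Finset V) : Set V)) = ⟨r c, hmem c c.2⟩ from
          Subtype.ext heq]
      · refine SimpleGraph.Adj.reachable ?_
        have hGxc : G.Adj (x : V) (c : V) := h
        show (contract G v w).Adj (r x) (r c)
        refine ⟨heq, ?_⟩
        by_cases hxw : (x : V) = w
        · have hcw : (c : V) ≠ w := fun hcw => hGxc.ne (hxw.trans hcw.symm)
          have hrx : r (x : V) = v := by simp [hr, hxw]
          have hrc : r (c : V) = (c : V) := by simp [hr, hcw]
          rw [hrx, hrc]
          exact Or.inr (Or.inl ⟨rfl, hxw ▸ hGxc, hcw⟩)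
        · by_cases hcw : (c : V) = w
          · have hrx : r (x : V) = (x : V) := by simp [hr, hxw]
            have hrc : r (c : V) = v := by simp [hr, hcw]
            rw [hrx, hrc]
            exact Or.inr (Or.inr ⟨rfl, hcw ▸ hGxc, hxw⟩)
          · have hrx : r (x : V) = (x : V) := by simp [hr, hxw]
            have hrc : r (c : V) = (c : V) := by simp [hr, hcw]
            rw [hrx, hrc]
            exact Or.inl ⟨hGxc, hxw, hcw⟩
  rw [SimpleGraph.connected_iff]
  constructor
  · rintro ⟨a, ha⟩ ⟨b, hb⟩
    have haS : a ∈ S := Finset.mem_of_mem_erase ha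
    have hbS : b ∈ S := Finset.mem_of_mem_erase hb
    obtain ⟨p⟩ := hconn.preconnected ⟨a, haS⟩ ⟨b, hbS⟩
    have hrab := key ⟨a, haS⟩ ⟨b, hbS⟩ p
    have haw : a ≠ w := (Finset.mem_erase.mp ha).1
    have hbw : b ≠ w := (Finset.mem_erase.mp hb).1
    have e1 : (⟨r a, hmem a haS⟩ : ((S.erase w : Finset V) : Set V)) = ⟨a, ha⟩ := by
      apply Subtype.ext; simp [hr, haw]
    have e2 : (⟨r b, hmem b hbS⟩ : ((S.erase w : Finset V) : Set V)) = ⟨b, hb⟩ := by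
      apply Subtype.ext; simp [hr, hbw]
    rwa [e1, e2] at hrab
  · exact ⟨⟨v, Finset.mem_erase.mpr ⟨hadj.ne, hv⟩⟩⟩

lemma eq_singleton_of_isolated {G : SimpleGraph V} {v : V} (h : ∀ u, ¬ G.Adj v u)
    {S : Finset V} (hv : v ∈ S) (hconn : (G.induce (S : Set V)).Connected) : S = {v} := by
  ext u
  simp only [Finset.mem_singleton]
  constructor
  · intro hu
    obtain ⟨p⟩ := hconn.preconnected ⟨v, hv⟩ ⟨u, hu⟩
    cases p with
    | nil => rfl
    | cons h' p => exact absurd h' (by simpa using h _)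
  · intro h'; rw [h']; exact hv

/-- The finset of "polymers" at `v` with total degree at most `ℓ`. -/
noncomputable def polyFil (G : SimpleGraph V) (v : V) (ℓ : ℕ) : Finset (Finset V) :=
  Finset.univ.filter (fun S : Finset V =>
    v ∈ S ∧ (G.induce (S : Set V)).Connected ∧ ∑ u ∈ S, G.degree u ≤ ℓ)

lemma mem_polyFil {G : SimpleGraph V} {v : V} {ℓ : ℕ} {S : Finset V} :
    S ∈ polyFil G v ℓ ↔
      v ∈ S ∧ (G.induce (S : Set V)).Connected ∧ ∑ u ∈ S, G.degree u ≤ ℓ := by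
  simp [polyFil]

lemma polyFil_card_le : ∀ (ℓ : ℕ) (G : SimpleGraph V) (v : V), (polyFil G v ℓ).card ≤ 2 ^ ℓ := by
  intro ℓ
  induction ℓ using Nat.strong_induction_on with
  | _ ℓ IH =>
    intro G v
    by_cases hiso : ∀ u, ¬ G.Adj v u
    · -- isolated vertex: at most one polymer, namely {v}
      have hone : (polyFil G v ℓ).card ≤ 1 := by
        apply Finset.card_le_one.mpr
        intro a ha b hb
        obtain ⟨hva, hca, -⟩ := mem_polyFil.mp ha
        obtain ⟨hvb, hcb, -⟩ := mem_polyFil.mp hb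
        rw [eq_singleton_of_isolated hiso hva hca, eq_singleton_of_isolated hiso hvb hcb]
      exact hone.trans (Nat.one_le_two_pow)
    · push_neg at hiso
      obtain ⟨w, hadj⟩ := hiso
      have hdegv : 1 ≤ G.degree v := by
        rw [← SimpleGraph.card_neighborFinset_eq_degree]
        exact Finset.card_pos.mpr ⟨w, (SimpleGraph.mem_neighborFinset _ _ _).mpr hadj⟩
      cases ℓ with
      | zero =>
        have : polyFil G v 0 = ∅ := by
          apply Finset.eq_empty_of_forall_notMem
          intro S hS
          obtain ⟨hvS, -, hsum⟩ := mem_polyFil.mp hS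
          have : G.degree v ≤ ∑ u ∈ S, G.degree u :=
            Finset.single_le_sum (f := fun u => G.degree u) (fun i _ => Nat.zero_le _) hvS
          omega
        rw [this]; simp
      | succ n =>
        set F := polyFil G v (n + 1) with hF
        have hsplit := Finset.card_filter_add_card_filter_not
          (s := F) (p := fun S => w ∈ S)
        -- the polymers not containing w inject (identically) into polymers of G - vw
        have hB : F.filter (fun S => w ∉ S) ⊆ polyFil (G.deleteEdges {s(v,w)}) v n := by
          intro S hS
          obtain ⟨hSF, hwS⟩ := Finset.mem_filter.mp hS
          obtain ⟨hvS, hconn, hsum⟩ := mem_polyFil.mp hSF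
          refine mem_polyFil.mpr ⟨hvS, ?_, ?_⟩
          · rw [deleteEdges_induce_eq hwS]; exact hconn
          · have e1 : ∑ u ∈ S.erase v, (G.deleteEdges {s(v,w)}).degree u
                = ∑ u ∈ S.erase v, G.degree u := by
              apply Finset.sum_congr rfl
              intro u hu
              exact deleteEdges_degree_eq (Finset.mem_erase.mp hu).1
                (fun huw => hwS (huw ▸ Finset.mem_of_mem_erase hu))
            have e2 := Finset.add_sum_erase S (fun u => (G.deleteEdges {s(v,w)}).degree u) hvS
            have e3 := Finset.add_sum_erase S (fun u => G.degree u) hvS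
            have e4 := deleteEdges_degree_v hadj
            beta_reduce at e2 e3
            have key : ∑ u ∈ S, (G.deleteEdges {s(v,w)}).degree u ≤ n := by omega
            convert key
        have hBcard : (F.filter (fun S => w ∉ S)).card ≤ 2 ^ n :=
          (Finset.card_le_card hB).trans (IH n (by omega) _ v)
        -- the polymers containing w inject (via erasing w) into polymers of G / vw
        have hAcard : (F.filter (fun S => w ∈ S)).card ≤ 2 ^ (n - 1) := by
          have hinj : (F.filter (fun S => w ∈ S)).card
              ≤ (polyFil (contract G v w) v (n - 1)).card := by
            apply Finset.card_le_card_of_injOn (fun S => S.erase w)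
            · intro S hS
              obtain ⟨hSF, hwS⟩ := Finset.mem_filter.mp hS
              obtain ⟨hvS, hconn, hsum⟩ := mem_polyFil.mp hSF
              refine mem_polyFil.mpr ⟨Finset.mem_erase.mpr ⟨hadj.ne, hvS⟩,
                contract_induce_connected hadj hvS hwS hconn, ?_⟩
              have hvT : v ∈ S.erase w := Finset.mem_erase.mpr ⟨hadj.ne, hvS⟩
              have e2 := Finset.add_sum_erase (S.erase w) (fun u => (contract G v w).degree u) hvT
              have e3 := Finset.add_sum_erase (S.erase w) (fun u => G.degree u) hvT
              have e4 := Finset.add_sum_erase S (fun u => G.degree u) hvS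
              have e5 : S.erase v ≠ S.erase w → True := fun _ => trivial
              -- relate ∑ over S.erase w to deg w
              -- ∑_{S} deg = deg v + ∑_{S.erase v} deg and w ∈ S.erase v
              have hwv : w ∈ S.erase v := Finset.mem_erase.mpr ⟨hadj.ne', hwS⟩
              have e7 := Finset.add_sum_erase (S.erase v) (fun u => G.degree u) hwv
              -- (S.erase v).erase w = (S.erase w).erase v
              have ecomm : (S.erase v).erase w = (S.erase w).erase v := by
                rw [Finset.erase_right_comm]
              have e8 : ∑ u ∈ (S.erase w).erase v, (contract G v w).degree u
                  ≤ ∑ u ∈ (S.erase w).erase v, G.degree u := by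
                apply Finset.sum_le_sum
                intro u hu
                have hu1 : u ≠ v := (Finset.mem_erase.mp hu).1
                have hu2 : u ≠ w := (Finset.mem_erase.mp (Finset.mem_of_mem_erase hu)).1
                exact contract_degree_le hu1 hu2
              have e9 := contract_degree_v hadj
              rw [ecomm] at e7
              beta_reduce at e2 e3 e4 e7
              have key : ∑ u ∈ S.erase w, (contract G v w).degree u ≤ n - 1 := by omega
              convert key
            · intro S1 hS1 S2 hS2 heq
              simp only [Finset.coe_filter, Set.mem_setOf_eq] at hS1 hS2
              have hw1 : w ∈ S1 := hS1.2
              have hw2 : w ∈ S2 := hS2.2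
              replace heq : S1.erase w = S2.erase w := heq
              have h' : insert w (S1.erase w) = insert w (S2.erase w) := by rw [heq]
              rwa [Finset.insert_erase hw1, Finset.insert_erase hw2] at h'
          exact hinj.trans (IH (n - 1) (by omega) _ v)
        have hpow : 2 ^ (n - 1) ≤ 2 ^ n := Nat.pow_le_pow_right (by norm_num) (Nat.sub_le n 1)
        have hpow2 : 2 ^ (n + 1) = 2 ^ n + 2 ^ n := by ring
        omega

end NPolyAux

/-- Lemma (npolymers): the number of connected vertex subsets `S` of a finite
simple graph `G` containing a fixed vertex `v` with total degree
`∑_{u ∈ S} deg_G(u) = ℓ` is at most `(2e)^(2ℓ-1)`. -/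
theorem connected_subsets_with_total_degree_le
    {V : Type*} [Fintype V] [DecidableEq V] (G : SimpleGraph V)
    (v : V) (ℓ : ℕ) (hℓ : 1 ≤ ℓ) :
    ((Finset.univ.filter (fun S : Finset V =>
        v ∈ S ∧ (G.induce (S : Set V)).Connected ∧
        ∑ u ∈ S, G.degree u = ℓ)).card : ℝ)
      ≤ (2 * Real.exp 1) ^ (2 * ℓ - 1) := by
  have hsub : (Finset.univ.filter (fun S : Finset V =>
        v ∈ S ∧ (G.induce (S : Set V)).Connected ∧
        ∑ u ∈ S, G.degree u = ℓ)) ⊆ NPolyAux.polyFil G v ℓ := by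
    intro S hS
    obtain ⟨-, h1, h2, h3⟩ := Finset.mem_filter.mp hS
    exact NPolyAux.mem_polyFil.mpr ⟨h1, h2, le_of_eq h3⟩
  have hcard : (Finset.univ.filter (fun S : Finset V =>
        v ∈ S ∧ (G.induce (S : Set V)).Connected ∧
        ∑ u ∈ S, G.degree u = ℓ)).card ≤ 2 ^ ℓ :=
    (Finset.card_le_card hsub).trans (NPolyAux.polyFil_card_le ℓ G v)
  have h1 : ((Finset.univ.filter (fun S : Finset V =>
        v ∈ S ∧ (G.induce (S : Set V)).Connected ∧
        ∑ u ∈ S, G.degree u = ℓ)).card : ℝ) ≤ (2 : ℝ) ^ ℓ := by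
    calc ((Finset.univ.filter (fun S : Finset V =>
        v ∈ S ∧ (G.induce (S : Set V)).Connected ∧
        ∑ u ∈ S, G.degree u = ℓ)).card : ℝ) ≤ ((2 ^ ℓ : ℕ) : ℝ) := Nat.cast_le.mpr hcard
      _ = (2 : ℝ) ^ ℓ := by push_cast; ring
  have hexp : (1 : ℝ) ≤ Real.exp 1 := by
    have := Real.add_one_le_exp 1
    linarith
  have h2 : (2 : ℝ) ^ ℓ ≤ (2 : ℝ) ^ (2 * ℓ - 1) :=
    pow_le_pow_right₀ one_le_two (by omega)
  have h3 : (2 : ℝ) ^ (2 * ℓ - 1) ≤ (2 * Real.exp 1) ^ (2 * ℓ - 1) := by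
    apply pow_le_pow_left₀ (by norm_num)
    linarith
  linarith
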